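/- Let S ⊆ ℝ^n be nonempty and compact, let f : S → ℝ be bounded with bound M, and suppose μ ∈ ℝ^n lies in the set of means of probability measures supported on S. Then sup over probability measures P on S with mean μ of ∫ f dP equals inf over (ρ, θ) ∈ ℝ^n × ℝ such that ρᵀξ + θ ≥ f(ξ) for all ξ ∈ S, of μᵀρ + θ, provided μ lies in the interior of the set { ∫ ξ dQ : Q a probability distribution on S }. -/

import Mathlib

open MeasureTheory

-- integrability of a.e.-bounded functions
lemma aux_int {n : ℕ} {S : Set (Fin n → ℝ)} {P : Measure (Fin n → ℝ)}
    [IsFiniteMeasure P] (hP : P Sᶜ = 0) {g : (Fin n → ℝ) → ℝ} (hg : Measurable g)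
    {C : ℝ} (hC : ∀ ξ ∈ S, |g ξ| ≤ C) : Integrable g P := by
  refine ⟨hg.aestronglyMeasurable, HasFiniteIntegral.of_bounded (C := C) ?_⟩
  refine ae_iff.2 (measure_mono_null ?_ hP)
  intro ξ hξ
  simp only [Set.mem_setOf_eq, not_le, Real.norm_eq_abs] at hξ
  intro hSξ
  exact absurd (hC ξ hSξ) (not_le.2 hξ)

-- coordinate bound from compactness
lemma aux_coord_bound {n : ℕ} {S : Set (Fin n → ℝ)} (hSc : IsCompact S) :
    ∃ R : ℝ, 0 ≤ R ∧ ∀ ξ ∈ S, ∀ i, |ξ i| ≤ R := by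
  obtain ⟨r, hr⟩ := hSc.isBounded.subset_closedBall 0
  refine ⟨max r 0, le_max_right _ _, fun ξ hξ i => ?_⟩
  have h1 : ‖ξ‖ ≤ r := by simpa using hr hξ
  calc |ξ i| = ‖ξ i‖ := rfl
    _ ≤ ‖ξ‖ := norm_le_pi_norm ξ i
    _ ≤ max r 0 := h1.trans (le_max_left _ _)

lemma aux_int_coord {n : ℕ} {S : Set (Fin n → ℝ)} (hSc : IsCompact S)
    {P : Measure (Fin n → ℝ)} [IsFiniteMeasure P] (hP : P Sᶜ = 0) (i : Fin n) :
    Integrable (fun ξ => ξ i) P := by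
  obtain ⟨R, hR0, hR⟩ := aux_coord_bound hSc
  exact aux_int hP (measurable_pi_apply i) (fun ξ hξ => hR ξ hξ i)

lemma aux_affine_integral {n : ℕ} {S : Set (Fin n → ℝ)} (hSc : IsCompact S)
    {P : Measure (Fin n → ℝ)} [IsProbabilityMeasure P] (hP : P Sᶜ = 0)
    (ρ : Fin n → ℝ) (θ : ℝ) {μ : Fin n → ℝ} (hmean : ∀ i, (∫ ξ, ξ i ∂P) = μ i) :
    ∫ ξ, ((∑ i, ρ i * ξ i) + θ) ∂P = (∑ i, ρ i * μ i) + θ := by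
  have hint : ∀ i : Fin n, Integrable (fun ξ => ρ i * ξ i) P :=
    fun i => (aux_int_coord hSc hP i).const_mul (ρ i)
  have hsum : Integrable (fun ξ => ∑ i, ρ i * ξ i) P :=
    integrable_finset_sum _ (fun i _ => hint i)
  rw [integral_add hsum (integrable_const θ), integral_finset_sum _ (fun i _ => hint i),
    integral_const]
  simp only [measure_univ, probReal_univ, ENNReal.toReal_one, one_smul]
  congr 1
  exact Finset.sum_congr rfl fun i _ => by rw [integral_const_mul, hmean i]

lemma aux_weak {n : ℕ} {S : Set (Fin n → ℝ)} (hSc : IsCompact S)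
    {f : (Fin n → ℝ) → ℝ} (hf : Measurable f) {M : ℝ} (hM : ∀ ξ ∈ S, |f ξ| ≤ M)
    {μ : Fin n → ℝ} {P : Measure (Fin n → ℝ)} [IsProbabilityMeasure P]
    (hP : P Sᶜ = 0) (hmean : ∀ i, (∫ ξ, ξ i ∂P) = μ i)
    {ρ : Fin n → ℝ} {θ : ℝ} (hfeas : ∀ ξ ∈ S, (∑ i, ρ i * ξ i) + θ ≥ f ξ) :
    ∫ ξ, f ξ ∂P ≤ (∑ i, μ i * ρ i) + θ := by
  have hint : ∀ i : Fin n, Integrable (fun ξ => ρ i * ξ i) P :=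
    fun i => (aux_int_coord hSc hP i).const_mul (ρ i)
  have hsum : Integrable (fun ξ => (∑ i, ρ i * ξ i) + θ) P :=
    (integrable_finset_sum _ (fun i _ => hint i)).add (integrable_const θ)
  have hle : ∫ ξ, f ξ ∂P ≤ ∫ ξ, ((∑ i, ρ i * ξ i) + θ) ∂P := by
    refine integral_mono_ae (aux_int hP hf hM) hsum ?_
    refine ae_iff.2 (measure_mono_null ?_ hP)
    intro ξ hξ
    simp only [Set.mem_setOf_eq, not_le] at hξ
    intro hSξ
    exact absurd (hfeas ξ hSξ) (not_le.2 hξ)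
  rw [aux_affine_integral hSc hP ρ θ hmean] at hle
  have : (∑ i, ρ i * μ i) = ∑ i, μ i * ρ i := Finset.sum_congr rfl fun i _ => mul_comm _ _
  linarith [hle, this ▸ hle]

lemma aux_mix {n : ℕ} {S : Set (Fin n → ℝ)} (hSc : IsCompact S)
    {f : (Fin n → ℝ) → ℝ} (hf : Measurable f) {M : ℝ} (hM : ∀ ξ ∈ S, |f ξ| ≤ M)
    {P Q : Measure (Fin n → ℝ)} [IsProbabilityMeasure P] [IsProbabilityMeasure Q]
    (hP : P Sᶜ = 0) (hQ : Q Sᶜ = 0) {a b : ℝ} (ha : 0 ≤ a) (hb : 0 ≤ b) (hab : a + b = 1) :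
    ∃ R : Measure (Fin n → ℝ), IsProbabilityMeasure R ∧ R Sᶜ = 0 ∧
      (∀ i, (∫ ξ, ξ i ∂ R) = a * (∫ ξ, ξ i ∂P) + b * (∫ ξ, ξ i ∂Q)) ∧
      (∫ ξ, f ξ ∂ R) = a * (∫ ξ, f ξ ∂P) + b * (∫ ξ, f ξ ∂Q) := by
  refine ⟨ENNReal.ofReal a • P + ENNReal.ofReal b • Q, ?_, ?_, ?_, ?_⟩
  · constructor
    simp only [Measure.add_apply, Measure.smul_apply, smul_eq_mul, measure_univ, mul_one]
    rw [← ENNReal.ofReal_add ha hb, hab, ENNReal.ofReal_one]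
  · simp only [Measure.add_apply, Measure.smul_apply, smul_eq_mul, hP, hQ, mul_zero, add_zero]
  · intro i
    rw [integral_add_measure ((aux_int_coord hSc hP i).smul_measure ENNReal.ofReal_ne_top)
        ((aux_int_coord hSc hQ i).smul_measure ENNReal.ofReal_ne_top),
      integral_smul_measure, integral_smul_measure, ENNReal.toReal_ofReal ha,
      ENNReal.toReal_ofReal hb, smul_eq_mul, smul_eq_mul]
  · rw [integral_add_measure ((aux_int hP hf hM).smul_measure ENNReal.ofReal_ne_top)
        ((aux_int hQ hf hM).smul_measure ENNReal.ofReal_ne_top),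
      integral_smul_measure, integral_smul_measure, ENNReal.toReal_ofReal ha,
      ENNReal.toReal_ofReal hb, smul_eq_mul, smul_eq_mul]

lemma aux_val_bound {n : ℕ} {S : Set (Fin n → ℝ)} {P : Measure (Fin n → ℝ)}
    [IsProbabilityMeasure P] (hP : P Sᶜ = 0) {g : (Fin n → ℝ) → ℝ}
    {C : ℝ} (hC : ∀ ξ ∈ S, |g ξ| ≤ C) : |∫ ξ, g ξ ∂P| ≤ C := by
  have h : ∀ᵐ ξ ∂P, ‖g ξ‖ ≤ C := by
    refine ae_iff.2 (measure_mono_null ?_ hP)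
    intro ξ hξ
    simp only [Set.mem_setOf_eq, not_le, Real.norm_eq_abs] at hξ
    intro hSξ
    exact absurd (hC ξ hSξ) (not_le.2 hξ)
  have := norm_integral_le_of_norm_le_const h
  simpa [measure_univ] using this

-- decomposition of a continuous linear functional on the product
lemma aux_decomp {n : ℕ} (φ : ((Fin n → ℝ) × ℝ) →L[ℝ] ℝ) (m : Fin n → ℝ) (r : ℝ) :
    φ (m, r) = (∑ i, m i * φ ((fun j => if i = j then 1 else 0), 0)) + r * φ (0, 1) := by
  have h1 : (m, r) = ((m, (0:ℝ)) + ((0 : Fin n → ℝ), r)) := by simp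
  rw [h1, map_add]
  congr 1
  · have h2 : ((φ : ((Fin n → ℝ) × ℝ) →ₗ[ℝ] ℝ).comp (LinearMap.inl ℝ (Fin n → ℝ) ℝ)) m
        = φ (m, 0) := rfl
    rw [← h2, LinearMap.pi_apply_eq_sum_univ]
    refine Finset.sum_congr rfl fun i _ => ?_
    rw [smul_eq_mul]
    rfl
  · have h3 : ((0 : Fin n → ℝ), r) = r • ((0 : Fin n → ℝ), (1:ℝ)) := by simp
    rw [h3, _root_.map_smul, smul_eq_mul]

section
variable {n : ℕ} {S : Set (Fin n → ℝ)}

set_option maxHeartbeats 1000000 in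
theorem stmt_6 (n : ℕ) (S : Set (Fin n → ℝ)) (hS : S.Nonempty) (hSc : IsCompact S)
    (hSm : MeasurableSet S) (f : (Fin n → ℝ) → ℝ) (hf : Measurable f)
    (M : ℝ) (hM : ∀ ξ ∈ S, |f ξ| ≤ M) (μ : Fin n → ℝ)
    (hμ : μ ∈ interior {m : Fin n → ℝ |
      ∃ Q : Measure (Fin n → ℝ), IsProbabilityMeasure Q ∧ Q Sᶜ = 0 ∧
        ∀ i, (∫ ξ, ξ i ∂Q) = m i}) :
    sSup {x : ℝ | ∃ P : Measure (Fin n → ℝ), IsProbabilityMeasure P ∧ P Sᶜ = 0 ∧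
        (∀ i, (∫ ξ, ξ i ∂P) = μ i) ∧ x = ∫ ξ, f ξ ∂P} =
    sInf {x : ℝ | ∃ (ρ : Fin n → ℝ) (θ : ℝ),
        (∀ ξ ∈ S, (∑ i, ρ i * ξ i) + θ ≥ f ξ) ∧ x = (∑ i, μ i * ρ i) + θ} := by
  obtain ⟨ξ₀, hξ₀⟩ := hS
  have hM0 : 0 ≤ M := (abs_nonneg _).trans (hM ξ₀ hξ₀)
  set prim := {x : ℝ | ∃ P : Measure (Fin n → ℝ), IsProbabilityMeasure P ∧ P Sᶜ = 0 ∧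
      (∀ i, (∫ ξ, ξ i ∂P) = μ i) ∧ x = ∫ ξ, f ξ ∂P} with hprim
  set dual := {x : ℝ | ∃ (ρ : Fin n → ℝ) (θ : ℝ),
      (∀ ξ ∈ S, (∑ i, ρ i * ξ i) + θ ≥ f ξ) ∧ x = (∑ i, μ i * ρ i) + θ} with hdual
  -- P₀ : a measure with mean μ
  obtain ⟨P₀, hP₀prob, hP₀S, hP₀mean⟩ := interior_subset hμ
  have hx₀ : (∫ ξ, f ξ ∂P₀) ∈ prim := ⟨P₀, hP₀prob, hP₀S, hP₀mean, rfl⟩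
  have hprimne : prim.Nonempty := ⟨_, hx₀⟩
  -- weak duality
  have hweak : ∀ x ∈ prim, ∀ y ∈ dual, x ≤ y := by
    rintro x ⟨P, hPp, hPS, hPm, rfl⟩ y ⟨ρ, θ, hfeas, rfl⟩
    exact aux_weak hSc hf hM hPS hPm hfeas
  have hdual0 : ((∑ i, μ i * (0:ℝ)) + M) ∈ dual := by
    refine ⟨0, M, fun ξ hξ => ?_, by simp⟩
    simp only [Pi.zero_apply, zero_mul, Finset.sum_const_zero, zero_add, ge_iff_le]
    exact (abs_le.1 (hM ξ hξ)).2
  have hdualne : dual.Nonempty := ⟨_, hdual0⟩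
  have hprimbdd : BddAbove prim := ⟨(∑ i, μ i * (0:ℝ)) + M, fun x hx => hweak x hx _ hdual0⟩
  have hdualbdd : BddBelow dual := ⟨∫ ξ, f ξ ∂P₀, fun y hy => hweak _ hx₀ y hy⟩
  have hle : sSup prim ≤ sInf dual :=
    csSup_le hprimne fun x hx => le_csInf hdualne fun y hy => hweak x hx y hy
  refine le_antisymm hle ?_
  set v := sSup prim with hv
  -- bounds on v
  have hvub : v ≤ M := csSup_le hprimne (by
    rintro x ⟨P, hPp, hPS, hPm, rfl⟩
    exact (abs_le.1 (aux_val_bound hPS hM)).2)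
  have hvlb : -M ≤ v := le_trans (abs_le.1 (aux_val_bound hP₀S hM)).1 (le_csSup hprimbdd hx₀)
  -- it suffices to show sInf dual ≤ v + ε for all ε > 0
  refine le_of_forall_pos_le_add fun ε hε => ?_
  -- the convex set A
  set A : Set ((Fin n → ℝ) × ℝ) := {p | ∃ P : Measure (Fin n → ℝ),
      IsProbabilityMeasure P ∧ P Sᶜ = 0 ∧ (∀ i, (∫ ξ, ξ i ∂P) = p.1 i) ∧
      p.2 = ∫ ξ, f ξ ∂P} with hA
  have hAconv : Convex ℝ A := by
    rintro ⟨m1, r1⟩ ⟨P, hPp, hPS, hPm, rfl⟩ ⟨m2, r2⟩ ⟨Q, hQp, hQS, hQm, rfl⟩ a b ha hb hab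
    obtain ⟨R, hRp, hRS, hRm, hRv⟩ := aux_mix hSc hf hM hPS hQS ha hb hab
    refine ⟨R, hRp, hRS, fun i => ?_, ?_⟩
    · rw [hRm i, hPm i, hQm i]; rfl
    · rw [hRv]; rfl
  -- the point (μ, v + ε) is not in the closure of A
  have hnotin : ((μ, v + ε) : (Fin n → ℝ) × ℝ) ∉ closure A := by
    intro hcl
    obtain ⟨δ, hδ0, hball⟩ := Metric.mem_nhds_iff.1 (mem_interior_iff_mem_nhds.1 hμ)
    set η := ε * δ / (2 * (δ + 4 * M + 1)) with hηdef
    have hden1 : (0:ℝ) < 2 * (δ + 4 * M + 1) := by nlinarith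
    have hη0 : 0 < η := div_pos (mul_pos hε hδ0) hden1
    have hηε : η < ε := by
      rw [hηdef, div_lt_iff₀ hden1]; nlinarith
    have hηeq : η * (2 * (δ + 4 * M + 1)) = ε * δ := by
      rw [hηdef]; field_simp
    obtain ⟨⟨m, r⟩, hpA, hpd⟩ := Metric.mem_closure_iff.1 hcl η hη0
    obtain ⟨P, hPp, hPS, hPm, hPv⟩ := hpA
    simp only at hPm hPv
    rw [Prod.dist_eq, max_lt_iff] at hpd
    obtain ⟨hd1, hd2⟩ := hpd
    simp only at hd1 hd2
    have hrlb : v + ε - η < r := by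
      have := abs_lt.1 (by rwa [Real.dist_eq] at hd2)
      linarith [this.1, this.2]
    set d : Fin n → ℝ := m - μ with hddef
    by_cases hd0 : d = 0
    · have hmμ : ∀ i, m i = μ i := fun i => by
        have := congrFun hd0 i
        simpa [hddef, sub_eq_zero] using this
      have hrp : r ∈ prim := ⟨P, hPp, hPS, fun i => (hPm i).trans (hmμ i), hPv⟩
      have := le_csSup hprimbdd hrp
      linarith
    · set nd := ‖d‖ with hndd
      have hnd0 : 0 < nd := norm_pos_iff.2 hd0
      have hndη : nd < η := by
        rw [hndd, hddef, ← dist_eq_norm, dist_comm]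
        exact hd1
      set c := (δ / 2) / nd with hc
      have hc0 : 0 < c := div_pos (by linarith) hnd0
      set μ' := μ - c • d with hμ'd
      have hμ'mem : μ' ∈ {mm : Fin n → ℝ | ∃ Q : Measure (Fin n → ℝ),
          IsProbabilityMeasure Q ∧ Q Sᶜ = 0 ∧ ∀ i, (∫ ξ, ξ i ∂Q) = mm i} := by
        refine hball ?_
        rw [Metric.mem_ball, hμ'd, dist_eq_norm]
        have heq : μ - c • d - μ = -(c • d) := by abel
        rw [heq, norm_neg, norm_smul, Real.norm_eq_abs, abs_of_pos hc0, hc,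
          div_mul_cancel₀ _ hnd0.ne']
        linarith
      obtain ⟨Q, hQp, hQS, hQm⟩ := hμ'mem
      set lam := (δ / 2) / (δ / 2 + nd) with hlamd
      have hdenl : (0:ℝ) < δ / 2 + nd := by linarith
      have hlam0 : 0 ≤ lam := le_of_lt (div_pos (by linarith) hdenl)
      have hlam1 : lam ≤ 1 := by
        rw [hlamd, div_le_one hdenl]; linarith
      obtain ⟨R, hRp, hRS, hRm, hRv⟩ :=
        aux_mix hSc hf hM hPS hQS hlam0 (by linarith : (0:ℝ) ≤ 1 - lam) (by ring)
      have key : (1 - lam) * c = lam := by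
        rw [hlamd, hc]
        field_simp
        ring
      have hRmean : ∀ i, (∫ ξ, ξ i ∂ R) = μ i := by
        intro i
        rw [hRm i, hPm i, hQm i]
        have hμ'i : μ' i = μ i - c * (m i - μ i) := by
          simp [hμ'd, hddef, smul_eq_mul]
        rw [hμ'i]
        linear_combination (μ i - m i) * key
      have hvR : lam * r + (1 - lam) * (∫ ξ, f ξ ∂Q) ≤ v := by
        have hmem : (∫ ξ, f ξ ∂ R) ∈ prim := ⟨R, hRp, hRS, hRmean, rfl⟩
        have := le_csSup hprimbdd hmem
        rw [hRv, ← hPv] at this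
        exact this
      set rQ := ∫ ξ, f ξ ∂Q with hrQd
      have habsQ := abs_le.1 (aux_val_bound hQS hM)
      have habsr : |r| ≤ M := by rw [hPv]; exact aux_val_bound hPS hM
      have habsr' := abs_le.1 habsr
      have ht : (1 - lam) * (δ / 2 + nd) = nd := by
        rw [hlamd]; field_simp; ring
      have e2 : r - (1 - lam) * (r - rQ) ≤ v := by
        have hid : lam * r + (1 - lam) * rQ = r - (1 - lam) * (r - rQ) := by ring
        linarith [hvR, hid ▸ hvR]
      have e1 : (1 - lam) * (r - rQ) ≤ (1 - lam) * (2 * M) :=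
        mul_le_mul_of_nonneg_left (by linarith [habsQ.1, habsr'.2]) (by linarith)
      have e3 : ε - η ≤ (1 - lam) * (2 * M) := by linarith
      have e4 : (1 - lam) * (δ / 2) < η := by
        nlinarith [ht, hndη, mul_nonneg (by linarith : (0:ℝ) ≤ 1 - lam) hnd0.le]
      have e5a : (ε - η) * (δ / 2) ≤ ((1 - lam) * (2 * M)) * (δ / 2) :=
        mul_le_mul_of_nonneg_right e3 (by linarith)
      have e5b : (2 * M) * ((1 - lam) * (δ / 2)) ≤ (2 * M) * η :=
        mul_le_mul_of_nonneg_left e4.le (by linarith)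
      nlinarith [e5a, e5b, hηeq, hη0, hδ0, hM0, hε, mul_pos hη0 hδ0,
        mul_nonneg hη0.le hM0, mul_pos hε hδ0]
  -- separation
  obtain ⟨φ, u, hu1, hu2⟩ :=
    geometric_hahn_banach_closed_point (hAconv.closure) isClosed_closure hnotin
  set ρ' : Fin n → ℝ := fun i => φ ((fun j => if i = j then 1 else 0), 0) with hρ'
  set s : ℝ := φ (0, 1) with hsdef
  have hdec : ∀ (m : Fin n → ℝ) (r : ℝ), φ (m, r) = (∑ i, m i * ρ' i) + r * s :=
    fun m r => aux_decomp φ m r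
  -- s > 0
  have hs : 0 < s := by
    have h1 := hu1 (μ, ∫ ξ, f ξ ∂P₀) (subset_closure ⟨P₀, hP₀prob, hP₀S, hP₀mean, rfl⟩)
    rw [hdec] at h1 hu2
    have hr₀ : (∫ ξ, f ξ ∂P₀) ≤ v := le_csSup hprimbdd hx₀
    nlinarith [h1, hu2, hr₀, hε]
  -- dual feasible point
  have hfeas : ∀ ξ ∈ S, (∑ i, (-ρ' i / s) * ξ i) + u / s ≥ f ξ := by
    intro ξ hξ
    have hmem : ((ξ, f ξ) : (Fin n → ℝ) × ℝ) ∈ A := by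
      refine ⟨Measure.dirac ξ, Measure.dirac.isProbabilityMeasure, ?_, fun i => ?_, ?_⟩
      · rw [Measure.dirac_apply' _ hSm.compl]
        exact Set.indicator_of_notMem (by simpa using hξ) _
      · exact integral_dirac' _ ξ (measurable_pi_apply i).stronglyMeasurable
      · exact (integral_dirac' _ ξ hf.stronglyMeasurable).symm
    have h1 := hu1 _ (subset_closure hmem)
    rw [hdec] at h1
    have hsum : (∑ i, (-ρ' i / s) * ξ i) = (∑ i, -ρ' i * ξ i) / s := by
      rw [Finset.sum_div]
      exact Finset.sum_congr rfl fun i _ => by ring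
    rw [ge_iff_le, hsum, ← add_div, le_div_iff₀ hs]
    have : (∑ i, -ρ' i * ξ i) = -∑ i, ξ i * ρ' i := by
      rw [← Finset.sum_neg_distrib]
      exact Finset.sum_congr rfl fun i _ => by ring
    rw [this]
    linarith [h1]
  have hval : ((∑ i, μ i * (-ρ' i / s)) + u / s) ≤ v + ε := by
    rw [hdec] at hu2
    have hsum : (∑ i, μ i * (-ρ' i / s)) = (-∑ i, μ i * ρ' i) / s :=
      calc (∑ i, μ i * (-ρ' i / s)) = ∑ i, (-(μ i * ρ' i)) / s :=
            Finset.sum_congr rfl fun i _ => by ring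
        _ = (∑ i, -(μ i * ρ' i)) / s := by rw [Finset.sum_div]
        _ = (-∑ i, μ i * ρ' i) / s := by rw [Finset.sum_neg_distrib]
    rw [hsum, ← add_div, div_le_iff₀ hs]
    linarith
  calc sInf dual ≤ (∑ i, μ i * (-ρ' i / s)) + u / s :=
        csInf_le hdualbdd ⟨_, _, hfeas, rfl⟩
    _ ≤ v + ε := hval
end
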